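/- arXiv:1708.00611 — 6 statements merged into one kernel-verified Lean document; each statement's English description precedes it below -/
import Mathlib

section
/- Let k ≥ 2 be an integer and define W_k(x) = Σ_{i=1}^{k} x^i/i and R_k(x) = W_k(x) − x^k. Then for every x ∈ [0,1], R_k(x) ≥ ((C_k − 1)/C_k) · W_k(x), where C_k = Σ_{i=1}^{k} 1/i is the k-th harmonic number. -/
noncomputable def harmonic' (k : ℕ) : ℝ := ∑ i ∈ Finset.Icc 1 k, (1 : ℝ) / i

noncomputable def Wpoly (k : ℕ) (x : ℝ) : ℝ := ∑ i ∈ Finset.Icc 1 k, x ^ i / i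

noncomputable def Rpoly (k : ℕ) (x : ℝ) : ℝ := Wpoly k x - x ^ k

theorem stmt0 (k : ℕ) (hk : 2 ≤ k) :
    ∀ x ∈ Set.Icc (0 : ℝ) 1,
      Rpoly k x ≥ ((harmonic' k - 1) / harmonic' k) * Wpoly k x := by
  intro x hx
  obtain ⟨hx0, hx1⟩ := hx
  have hC : 0 < harmonic' k := by
    unfold harmonic'
    apply Finset.sum_pos
    · intro i hi
      simp only [Finset.mem_Icc] at hi
      have : (0:ℝ) < i := by exact_mod_cast hi.1
      positivity
    · exact ⟨1, by simp; omega⟩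
  have key : harmonic' k * x ^ k ≤ Wpoly k x := by
    unfold harmonic' Wpoly
    rw [Finset.sum_mul]
    apply Finset.sum_le_sum
    intro i hi
    simp only [Finset.mem_Icc] at hi
    rw [one_div, inv_mul_eq_div]
    apply div_le_div_of_nonneg_right _ (by positivity)
    exact pow_le_pow_of_le_one hx0 hx1 hi.2
  unfold Rpoly
  rw [ge_iff_le, div_mul_eq_mul_div, div_le_iff₀ hC]
  nlinarith
end

section
/- For every integer k ≥ 2, the function f(x) = 1 − x^k/(x + x²/2 + ⋯ + x^k/k) is monotonically decreasing on (0,1]. -/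
theorem stmt1 (k : ℕ) (hk : 2 ≤ k) :
    AntitoneOn (fun x : ℝ => 1 - x ^ k / (∑ i ∈ Finset.Icc 1 k, x ^ i / i))
      (Set.Ioc (0 : ℝ) 1) := by
  intro a ha b hb hab
  simp only
  have hS : ∀ x : ℝ, 0 < x → 0 < ∑ i ∈ Finset.Icc 1 k, x ^ i / i := by
    intro x hx
    apply Finset.sum_pos
    · intro i hi
      simp only [Finset.mem_Icc] at hi
      have : (0:ℝ) < i := by exact_mod_cast hi.1
      positivity
    · exact ⟨1, Finset.mem_Icc.2 ⟨le_refl 1, le_trans one_le_two hk⟩⟩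
  have hSa := hS a ha.1
  have hSb := hS b (lt_of_lt_of_le ha.1 hab)
  have key : a ^ k / (∑ i ∈ Finset.Icc 1 k, a ^ i / i)
      ≤ b ^ k / (∑ i ∈ Finset.Icc 1 k, b ^ i / i) := by
    rw [div_le_div_iff₀ hSa hSb]
    rw [Finset.mul_sum, Finset.mul_sum]
    apply Finset.sum_le_sum
    intro i hi
    simp only [Finset.mem_Icc] at hi
    have hik : i ≤ k := hi.2
    have hkeq : k = i + (k - i) := (Nat.add_sub_cancel' hik).symm
    have h1 : a ^ k * (b ^ i / i) = (a ^ i * b ^ i) * a ^ (k - i) / i := by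
      rw [hkeq, pow_add]; simp only [Nat.add_sub_cancel_left]; ring
    have h2 : b ^ k * (a ^ i / i) = (a ^ i * b ^ i) * b ^ (k - i) / i := by
      rw [hkeq, pow_add]; simp only [Nat.add_sub_cancel_left]; ring
    rw [h1, h2]
    have hpow : a ^ (k - i) ≤ b ^ (k - i) := pow_le_pow_left₀ ha.1.le hab _
    have hposab : (0:ℝ) ≤ a ^ i * b ^ i := mul_nonneg (pow_nonneg ha.1.le _) (pow_nonneg hb.1.le _)
    have hi0 : (0:ℝ) < i := by exact_mod_cast hi.1
    gcongr
  linarith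
end

section
/- Let p_1 ≥ p_2 ≥ ⋯ ≥ p_n > 0 be positive reals with n ≥ 2. There exists a symmetric nonnegative matrix (m_{ij})_{i,j∈[n]} with m_{ii} = 0 for all i and Σ_{j} m_{ij} = p_i for all i, if and only if p_1 ≤ Σ_{i=2}^{n} p_i. -/
lemma ov_split (a b c d e : ℝ) (hcd : c ≤ d) (hde : d ≤ e) :
    max 0 (min b e - max a c) = max 0 (min b d - max a c) + max 0 (min b e - max a d) := by
  rcases le_total b d with hbd | hbd
  · rw [min_eq_left hbd, min_eq_left (hbd.trans hde),
      max_eq_left (by have := le_max_right a d; linarith : b - max a d ≤ 0), add_zero]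
  · rw [min_eq_right hbd]
    rcases le_total a d with had | had
    · rw [max_eq_right had]
      rcases le_total b e with hbe | hbe
      · rw [min_eq_left hbe]
        have h1 : max a c ≤ d := le_trans (max_le_max le_rfl hcd) (by simp [had])
        rw [max_eq_right (by linarith : (0:ℝ) ≤ d - max a c),
          max_eq_right (by linarith : (0:ℝ) ≤ b - d)]
        have h2 : max 0 (b - max a c) = b - max a c :=
          max_eq_right (by linarith : (0:ℝ) ≤ b - max a c)
        rw [h2]; ring
      · rw [min_eq_right hbe]
        have h1 : max a c ≤ d := le_trans (max_le_max le_rfl hcd) (by simp [had])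
        rw [max_eq_right (by linarith : (0:ℝ) ≤ d - max a c),
          max_eq_right (by linarith : (0:ℝ) ≤ e - d)]
        have h2 : max 0 (e - max a c) = e - max a c :=
          max_eq_right (by linarith : (0:ℝ) ≤ e - max a c)
        rw [h2]; ring
    · have hca : c ≤ a := hcd.trans had
      rw [max_eq_left had, max_eq_left hca,
        max_eq_left (by linarith : d - a ≤ 0), zero_add]

lemma ov_sum (a b : ℝ) (c : ℕ → ℝ) (hc : ∀ k, c k ≤ c (k + 1)) :
    ∀ m, ∑ k ∈ Finset.range m, max 0 (min b (c (k + 1)) - max a (c k))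
      = max 0 (min b (c m) - max a (c 0)) := by
  intro m
  induction m with
  | zero =>
    simp only [Finset.range_zero, Finset.sum_empty]
    rw [max_eq_left]
    have h1 : min b (c 0) ≤ c 0 := min_le_right _ _
    have h2 : c 0 ≤ max a (c 0) := le_max_right _ _
    linarith
  | succ m ih =>
    rw [Finset.sum_range_succ, ih,
      ov_split a b (c 0) (c m) (c (m + 1)) (monotone_nat_of_le_succ hc (Nat.zero_le m)) (hc m)]

lemma ov_symm_helper (x X y Y t : ℝ) :
    max 0 (min X (Y - t) - max x (y - t)) = max 0 (min Y (X + t) - max y (x + t)) := by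
  have h1 : min Y (X + t) = min X (Y - t) + t := by
    rw [← min_add_add_right, sub_add_cancel, min_comm]
  have h2 : max y (x + t) = max x (y - t) + t := by
    rw [← max_add_add_right, sub_add_cancel, max_comm]
  rw [h1, h2]; ring_nf

theorem stmt5 (n : ℕ) (hn : 2 ≤ n) (p : Fin n → ℝ)
    (hpos : ∀ i, 0 < p i)
    (hsort : ∀ i j : Fin n, i ≤ j → p j ≤ p i) :
    (∃ M : Fin n → Fin n → ℝ,
        (∀ i j, M i j = M j i) ∧
        (∀ i j, 0 ≤ M i j) ∧
        (∀ i, M i i = 0) ∧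
        (∀ i, ∑ j, M i j = p i)) ↔
      p ⟨0, by omega⟩ ≤ ∑ i ∈ Finset.univ.erase ⟨0, by omega⟩, p i := by
  have hn0 : 0 < n := by omega
  set z : Fin n := ⟨0, hn0⟩ with hz
  constructor
  · rintro ⟨M, hsym, hnn, hdiag, hrow⟩
    have h1 : ∑ j ∈ Finset.univ.erase z, M z j = p z := by
      rw [Finset.sum_erase _ (hdiag z), hrow z]
    rw [← h1]
    refine Finset.sum_le_sum fun j _ => ?_
    rw [hsym z j, ← hrow j]
    exact Finset.single_le_sum (fun k _ => hnn j k) (Finset.mem_univ z)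
  · intro hle
    set S : ℝ := ∑ i, p i with hSdef
    have hS : S = p z + ∑ i ∈ Finset.univ.erase z, p i :=
      (Finset.add_sum_erase _ _ (Finset.mem_univ z)).symm
    set H : ℝ := S / 2 with hH
    have hzle : ∀ i : Fin n, z ≤ i := fun i => by
      simp [Fin.le_def, hz]
    have hhalf : ∀ i, p i ≤ H := fun i => by
      have h0 : p i ≤ p z := hsort z i (hzle i)
      have := hpos i
      rw [hH]; linarith [hS, hle]
    have hHpos : 0 ≤ H := le_trans (hpos z).le (hhalf z)
    set q : ℕ → ℝ := fun k => if h : k < n then p ⟨k, h⟩ else 0 with hq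
    have hq0 : ∀ k, 0 ≤ q k := fun k => by
      rw [hq]; dsimp only; split
      · exact (hpos _).le
      · exact le_rfl
    set a : ℕ → ℝ := fun k => ∑ t ∈ Finset.range k, q t with ha
    have ha0 : ∀ k, 0 ≤ a k := fun k => Finset.sum_nonneg fun t _ => hq0 t
    have hasucc : ∀ k, a (k + 1) = a k + q k := fun k => Finset.sum_range_succ q k
    have hamono : Monotone a :=
      monotone_nat_of_le_succ fun k => by rw [hasucc]; linarith [hq0 k]
    have haS : a n = S := by
      show ∑ t ∈ Finset.range n, q t = ∑ i, p i
      rw [← Fin.sum_univ_eq_sum_range q n]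
      refine Finset.sum_congr rfl fun i _ => ?_
      rw [hq]; dsimp only
      rw [dif_pos i.isLt]
    have hpa : ∀ i : Fin n, a (↑i + 1) = a ↑i + p i := fun i => by
      rw [hasucc, hq]; dsimp only; rw [dif_pos i.isLt]
    -- the matrix
    refine ⟨fun i j =>
      max 0 (min (a (↑i + 1)) (a (↑j + 1) + H - S) - max (a ↑i) (a ↑j + H - S)) +
      max 0 (min (a (↑i + 1)) (a (↑j + 1) + H) - max (a ↑i) (a ↑j + H)), ?_, ?_, ?_, ?_⟩
    · intro i j
      dsimp only
      have hSH : ∀ u : ℝ, u + H - S = u - H := fun u => by rw [hH]; ring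
      simp only [hSH]
      rw [ov_symm_helper (a ↑i) (a (↑i + 1)) (a ↑j) (a (↑j + 1)) H,
        ← ov_symm_helper (a ↑j) (a (↑j + 1)) (a ↑i) (a (↑i + 1)) H]
      exact add_comm _ _
    · intro i j
      dsimp only
      have := le_max_left (0:ℝ) (min (a (↑i + 1)) (a (↑j + 1) + H - S) - max (a ↑i) (a ↑j + H - S))
      have := le_max_left (0:ℝ) (min (a (↑i + 1)) (a (↑j + 1) + H) - max (a ↑i) (a ↑j + H))
      linarith
    · intro i
      dsimp only
      have hip : a (↑i + 1) = a ↑i + p i := hpa i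
      have hpH : p i ≤ H := hhalf i
      have hSH : a ↑i + H - S = a ↑i - H := by rw [hH]; ring
      have hSH2 : a (↑i + 1) + H - S = a (↑i + 1) - H := by rw [hH]; ring
      rw [hSH, hSH2,
        min_eq_right (by linarith : a (↑i + 1) - H ≤ a (↑i + 1)),
        max_eq_left (by linarith : a ↑i - H ≤ a ↑i),
        min_eq_left (by linarith : a (↑i + 1) ≤ a (↑i + 1) + H),
        max_eq_right (by linarith : a ↑i ≤ a ↑i + H),
        max_eq_left (by linarith : a (↑i + 1) - H - a ↑i ≤ 0),
        max_eq_left (by linarith : a (↑i + 1) - (a ↑i + H) ≤ 0), add_zero]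
    · intro i
      dsimp only
      set c : ℕ → ℝ := fun k => if k < n then a k + H - S else a (k - n) + H with hcdef
      have hc1 : ∀ j, j ≤ n → c j = a j + H - S := by
        intro j hj
        rcases lt_or_eq_of_le hj with h | h
        · show (if j < n then a j + H - S else a (j - n) + H) = a j + H - S
          rw [if_pos h]
        · rw [h]
          show (if n < n then a n + H - S else a (n - n) + H) = a n + H - S
          rw [if_neg (lt_irrefl n), Nat.sub_self]
          have : a 0 = 0 := Finset.sum_range_zero q
          rw [this, haS]; ring
      have hc2 : ∀ j, c (j + n) = a j + H := by
        intro j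
        show (if j + n < n then a (j + n) + H - S else a (j + n - n) + H) = a j + H
        rw [if_neg (by omega), Nat.add_sub_cancel]
      have hcmono : ∀ k, c k ≤ c (k + 1) := by
        intro k
        rcases lt_or_ge (k + 1) n with h | h
        · rw [hc1 k (by omega), hc1 (k + 1) (by omega)]
          have := hamono (Nat.le_succ k)
          linarith
        · rcases lt_or_ge k n with h2 | h2
          · rw [hc1 k (by omega), hc1 (k + 1) (by omega)]
            have := hamono (Nat.le_succ k)
            linarith
          · obtain ⟨j, rfl⟩ : ∃ j, k = j + n := ⟨k - n, by omega⟩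
            rw [hc2 j, show j + n + 1 = (j + 1) + n by ring, hc2 (j + 1)]
            have := hamono (Nat.le_succ j)
            linarith
      set g : ℕ → ℝ := fun k => max 0 (min (a (↑i + 1)) (c (k + 1)) - max (a ↑i) (c k)) with hg
      have key : ∀ j : Fin n,
          max 0 (min (a (↑i + 1)) (a (↑j + 1) + H - S) - max (a ↑i) (a ↑j + H - S)) +
          max 0 (min (a (↑i + 1)) (a (↑j + 1) + H) - max (a ↑i) (a ↑j + H))
          = g ↑j + g (n + ↑j) := by
        intro j
        simp only [hg]
        rw [hc1 ↑j (le_of_lt j.isLt), hc1 (↑j + 1) j.isLt,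
          show n + ↑j = ↑j + n by ring, show ↑j + n + 1 = (↑j + 1) + n by ring,
          hc2 ↑j, hc2 (↑j + 1)]
      have e1 : ∑ j : Fin n,
          (max 0 (min (a (↑i + 1)) (a (↑j + 1) + H - S) - max (a ↑i) (a ↑j + H - S)) +
           max 0 (min (a (↑i + 1)) (a (↑j + 1) + H) - max (a ↑i) (a ↑j + H)))
          = ∑ k ∈ Finset.range (n + n), g k := by
        rw [Finset.sum_congr rfl fun j _ => key j,
          Fin.sum_univ_eq_sum_range (fun k => g k + g (n + k)) n,
          Finset.sum_add_distrib, Finset.sum_range_add g n n]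
      rw [e1, ov_sum (a ↑i) (a (↑i + 1)) c hcmono (n + n), hc2 n, haS,
        hc1 0 (Nat.zero_le n)]
      have ha0' : a 0 = 0 := Finset.sum_range_zero q
      rw [ha0']
      have h1 : a (↑i + 1) ≤ S := haS ▸ hamono i.isLt
      have h2 : 0 ≤ a ↑i := ha0 ↑i
      have hS0 : 0 ≤ S := haS ▸ ha0 n
      rw [min_eq_left (show a (↑i + 1) ≤ S + H by linarith),
        max_eq_left (show (0:ℝ) + H - S ≤ a ↑i by rw [hH]; linarith),
        max_eq_right (show (0:ℝ) ≤ a (↑i + 1) - a ↑i by linarith [hpa i, (hpos i).le])]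
      linarith [hpa i]
end

section
/- Let X be a Binomial(m, p) random variable with p ∈ (0, 1/2). There exists N such that for all m ≥ N, with k = ⌈pm + m^{3/4}⌉, the conditional expectation satisfies E[X | X ≥ k] < 2mp. -/
open Finset

/-- Weighted geometric tail sum bound. -/
lemma geom_tail_bound {r : ℝ} (h0 : 0 ≤ r) (h1 : r < 1) (n : ℕ) :
    ∑ j ∈ range n, (j : ℝ) * r ^ j ≤ r / (1 - r) ^ 2 := by
  have hnorm : ‖r‖ < 1 := by rwa [Real.norm_eq_abs, abs_of_nonneg h0]
  have hsum : Summable (fun j : ℕ => (j : ℝ) * r ^ j) := by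
    simpa using summable_pow_mul_geometric_of_norm_lt_one 1 hnorm
  calc ∑ j ∈ range n, (j : ℝ) * r ^ j
      ≤ ∑' j : ℕ, (j : ℝ) * r ^ j := by
        refine Summable.sum_le_tsum _ (fun j _ => ?_) hsum
        positivity
    _ = r / (1 - r) ^ 2 := tsum_coe_mul_geometric_of_norm_lt_one hnorm

set_option maxHeartbeats 1000000 in
theorem stmt7 (p : ℝ) (hp : 0 < p) (hp2 : p < 1 / 2) :
    ∃ N : ℕ, ∀ m : ℕ, N ≤ m →
      (∑ i ∈ Finset.Icc (⌈p * m + (m : ℝ) ^ ((3 : ℝ) / 4)⌉₊) m,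
          (m.choose i : ℝ) * p ^ i * (1 - p) ^ (m - i) * i) /
        (∑ i ∈ Finset.Icc (⌈p * m + (m : ℝ) ^ ((3 : ℝ) / 4)⌉₊) m,
          (m.choose i : ℝ) * p ^ i * (1 - p) ^ (m - i)) <
      2 * m * p := by
  have hp1 : (0:ℝ) < 1 - p := by linarith
  set c : ℝ := min p (1 - p) with hc
  have hcpos : 0 < c := lt_min hp hp1
  obtain ⟨N0, hN0⟩ : ∃ N0 : ℕ, (6 / c) ^ (4:ℕ) < (N0:ℝ) := exists_nat_gt _
  refine ⟨max N0 1, fun m hm => ?_⟩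
  have hm1 : 1 ≤ m := le_trans (le_max_right _ _) hm
  have hmpos : (0:ℝ) < m := by exact_mod_cast hm1
  have hm1R : (1:ℝ) ≤ m := by exact_mod_cast hm1
  have hmN0 : (6 / c) ^ (4:ℕ) < (m:ℝ) :=
    lt_of_lt_of_le hN0 (by exact_mod_cast le_trans (le_max_left _ _) hm)
  set q : ℝ := (m : ℝ) ^ ((3:ℝ)/4) with hq
  have hqpos : 0 < q := Real.rpow_pos_of_pos hmpos _
  -- key: 6 * q < c * m
  have hkey : 6 * q < c * m := by
    have h64 : 6 / c < (m:ℝ) ^ ((1:ℝ)/4) := by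
      have h1 : ((6/c) ^ (4:ℕ)) ^ ((1:ℝ)/4) < ((m:ℝ)) ^ ((1:ℝ)/4) :=
        Real.rpow_lt_rpow (by positivity) hmN0 (by norm_num)
      calc 6 / c = ((6/c) ^ (4:ℕ)) ^ ((1:ℝ)/4) := by
            rw [← Real.rpow_natCast (6/c) 4, ← Real.rpow_mul (by positivity)]
            norm_num
        _ < _ := h1
    have h6 : 6 < c * (m:ℝ) ^ ((1:ℝ)/4) := by
      rw [div_lt_iff₀ hcpos] at h64; linarith [h64]
    have hmul : (m:ℝ) ^ ((1:ℝ)/4) * q = m := by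
      rw [hq, ← Real.rpow_add hmpos]
      norm_num
    calc 6 * q < (c * (m:ℝ) ^ ((1:ℝ)/4)) * q := by
          exact mul_lt_mul_of_pos_right h6 hqpos
      _ = c * m := by rw [mul_assoc, hmul]
  -- auxiliary comparisons
  have hsq : (m:ℝ) ^ ((1:ℝ)/2) ≤ q :=
    Real.rpow_le_rpow_of_exponent_le hm1R (by norm_num)
  have h1q : (1:ℝ) ≤ q := Real.one_le_rpow hm1R (by norm_num)
  have hsmall : q + 4 * (m:ℝ) ^ ((1:ℝ)/2) + 1 ≤ 6 * q := by linarith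
  have hcp : c ≤ p := min_le_left _ _
  have hc1p : c ≤ 1 - p := min_le_right _ _
  set K : ℕ := ⌈p * m + q⌉₊ with hK
  have hKarg : (0:ℝ) ≤ p * m + q := by positivity
  have hKge : p * m + q ≤ (K:ℝ) := Nat.le_ceil _
  have hKlt : (K:ℝ) < p * m + q + 1 := Nat.ceil_lt_add_one hKarg
  have hKltm : (K:ℝ) < m := by
    have : q + 1 ≤ 6 * q := by linarith
    have h2 : 6 * q < (1 - p) * m := lt_of_lt_of_le hkey (by nlinarith [hc1p, hmpos])
    nlinarith
  have hKm : K ≤ m := le_of_lt (by exact_mod_cast hKltm)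
  -- the binomial weights
  set b : ℕ → ℝ := fun i => (m.choose i : ℝ) * p ^ i * (1 - p) ^ (m - i) with hb
  have hbnn : ∀ i, 0 ≤ b i := fun i => by
    simp only [hb]; positivity
  have hbKpos : 0 < b K := by
    simp only [hb]
    have : 0 < m.choose K := Nat.choose_pos hKm
    positivity
  set Den : ℝ := ∑ i ∈ Icc K m, b i with hDen
  have hDenK : b K ≤ Den := by
    refine single_le_sum (fun i _ => hbnn i) ?_
    simp [mem_Icc, hKm]
  have hDenpos : 0 < Den := lt_of_lt_of_le hbKpos hDenK
  -- the geometric ratio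
  set r : ℝ := p * ((m:ℝ) - K) / ((1 - p) * (K + 1)) with hr
  have hden : (0:ℝ) < (1 - p) * (K + 1) := by positivity
  have hrnn : 0 ≤ r := by
    apply div_nonneg _ (le_of_lt hden)
    have : (K:ℝ) ≤ m := le_of_lt hKltm
    nlinarith
  -- lower bound on 1 - r
  have hnum : q ≤ (K:ℝ) + 1 - p - p * m := by linarith
  have h1r : 1 - r = ((K:ℝ) + 1 - p - p * m) / ((1 - p) * (K + 1)) := by
    rw [hr]; field_simp; ring
  have hdenle : (1 - p) * (K + 1) ≤ 2 * m := by
    have h1 : (0:ℝ) ≤ p * ((K:ℝ) + 1) := by positivity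
    nlinarith [hKltm, hm1R]
  have h1rge : q / (2 * m) ≤ 1 - r := by
    rw [h1r]
    exact div_le_div₀ (by linarith) hnum hden hdenle
  have h1rpos : 0 < 1 - r := lt_of_lt_of_le (by positivity) h1rge
  have hrlt1 : r < 1 := by linarith
  -- ratio step: b (i+1) ≤ r * b i for K ≤ i < m
  have hstep : ∀ i, K ≤ i → i < m → b (i + 1) ≤ r * b i := by
    intro i hKi him
    have hiK : (K:ℝ) ≤ i := by exact_mod_cast hKi
    have himR : (i:ℝ) < m := by exact_mod_cast him
    have hCh : (m.choose (i+1) : ℝ) * (i+1) = (m.choose i : ℝ) * ((m:ℝ) - i) := by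
      rw [← Nat.cast_sub (le_of_lt him)]
      exact_mod_cast Nat.choose_succ_right_eq m i
    have hmi : m - i = (m - (i+1)) + 1 := by omega
    set c1 := (m.choose i : ℝ) with hc1
    set c2 := (m.choose (i+1) : ℝ) with hc2
    set B := (1 - p) ^ (m - (i+1)) with hBdef
    have hc1nn : 0 ≤ c1 := by positivity
    have hBnn : 0 ≤ B := by positivity
    have hb1 : b i = c1 * p ^ i * (B * (1 - p)) := by
      simp only [hb, hmi, pow_succ, hBdef, hc1]
    have hb2 : b (i+1) = c2 * (p ^ i * p) * B := by
      simp only [hb, pow_succ, hBdef, hc2]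
    rw [hr, div_mul_eq_mul_div, le_div_iff₀ hden]
    rw [← mul_le_mul_iff_of_pos_right (show (0:ℝ) < (i:ℝ) + 1 by positivity)]
    have key : ((m:ℝ) - i) * ((K:ℝ) + 1) ≤ ((m:ℝ) - K) * ((i:ℝ) + 1) := by
      nlinarith [mul_nonneg (show (0:ℝ) ≤ (m:ℝ) + 1 by positivity)
        (show (0:ℝ) ≤ (i:ℝ) - K by linarith)]
    have hfac : 0 ≤ c1 * p ^ i * p * B * (1 - p) := by positivity
    calc b (i+1) * ((1 - p) * ((K:ℝ) + 1)) * ((i:ℝ) + 1)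
        = (c2 * ((i:ℝ)+1)) * (p ^ i * p) * B * ((1 - p) * ((K:ℝ) + 1)) := by
          rw [hb2]; ring
      _ = (c1 * p ^ i * p * B * (1 - p)) * (((m:ℝ) - i) * ((K:ℝ) + 1)) := by
          rw [hCh]; ring
      _ ≤ (c1 * p ^ i * p * B * (1 - p)) * (((m:ℝ) - K) * ((i:ℝ) + 1)) :=
          mul_le_mul_of_nonneg_left key hfac
      _ = p * ((m:ℝ) - K) * b i * ((i:ℝ) + 1) := by rw [hb1]; ring
  -- geometric decay from K
  have hgeom : ∀ j, K + j ≤ m → b (K + j) ≤ b K * r ^ j := by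
    intro j
    induction j with
    | zero => intro _; simp
    | succ n ih =>
      intro hjm
      have hlt : K + n < m := by omega
      calc b (K + (n+1)) = b ((K + n) + 1) := rfl
        _ ≤ r * b (K + n) := hstep (K+n) (by omega) hlt
        _ ≤ r * (b K * r ^ n) := mul_le_mul_of_nonneg_left (ih (by omega)) hrnn
        _ = b K * r ^ (n+1) := by ring
  -- tail sum bound
  set T : ℝ := ∑ i ∈ Icc K m, ((i:ℝ) - K) * b i with hT
  have hTle : T ≤ b K * (r / (1 - r) ^ 2) := by
    rw [hT, ← Finset.Ico_add_one_right_eq_Icc, Finset.sum_Ico_eq_sum_range]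
    have hbound : ∀ j ∈ range (m + 1 - K),
        (((K + j : ℕ) : ℝ) - K) * b (K + j) ≤ b K * ((j:ℝ) * r ^ j) := by
      intro j hj
      rw [mem_range] at hj
      have hjm : K + j ≤ m := by omega
      have h1 : ((K + j : ℕ) : ℝ) - K = (j : ℝ) := by push_cast; ring
      rw [h1]
      calc (j : ℝ) * b (K + j) ≤ (j : ℝ) * (b K * r ^ j) :=
            mul_le_mul_of_nonneg_left (hgeom j hjm) (by positivity)
        _ = b K * ((j:ℝ) * r ^ j) := by ring
    calc ∑ j ∈ range (m + 1 - K), (((K + j : ℕ) : ℝ) - K) * b (K + j)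
        ≤ ∑ j ∈ range (m + 1 - K), b K * ((j:ℝ) * r ^ j) := sum_le_sum hbound
      _ = b K * ∑ j ∈ range (m + 1 - K), (j:ℝ) * r ^ j := by rw [mul_sum]
      _ ≤ b K * (r / (1 - r) ^ 2) :=
          mul_le_mul_of_nonneg_left (geom_tail_bound hrnn hrlt1 _) hbKpos.le
  -- bound r/(1-r)^2 ≤ 4 √m
  have hrb : r / (1 - r) ^ 2 ≤ 4 * (m:ℝ) ^ ((1:ℝ)/2) := by
    have e1 : q ^ 2 = (m:ℝ) ^ ((3:ℝ)/2) := by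
      rw [hq, ← Real.rpow_natCast ((m:ℝ) ^ ((3:ℝ)/4)) 2, ← Real.rpow_mul hmpos.le]
      norm_num
    have e2 : (m:ℝ) ^ ((1:ℝ)/2) * (m:ℝ) ^ ((3:ℝ)/2) = (m:ℝ) ^ (2:ℕ) := by
      rw [← Real.rpow_natCast (m:ℝ) 2, ← Real.rpow_add hmpos]
      norm_num
    have h5 : 4 * (m:ℝ) ^ ((1:ℝ)/2) * (q / (2*m)) ^ 2 = 1 := by
      have hmne : (m:ℝ) ≠ 0 := ne_of_gt hmpos
      calc 4 * (m:ℝ) ^ ((1:ℝ)/2) * (q / (2*m)) ^ 2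
          = ((m:ℝ) ^ ((1:ℝ)/2) * q ^ 2) / (m:ℝ) ^ (2:ℕ) := by
            rw [div_pow]; field_simp; ring
        _ = ((m:ℝ) ^ (2:ℕ)) / (m:ℝ) ^ (2:ℕ) := by rw [e1, e2]
        _ = 1 := div_self (by positivity)
    have h3 : (q / (2*m)) ^ 2 ≤ (1 - r) ^ 2 := by
      apply pow_le_pow_left₀ (by positivity) h1rge
    have h2 : 1 ≤ 4 * (m:ℝ) ^ ((1:ℝ)/2) * (1 - r) ^ 2 := by
      calc (1:ℝ) = 4 * (m:ℝ) ^ ((1:ℝ)/2) * (q / (2*m)) ^ 2 := h5.symm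
        _ ≤ 4 * (m:ℝ) ^ ((1:ℝ)/2) * (1 - r) ^ 2 :=
            mul_le_mul_of_nonneg_left h3 (by positivity)
    rw [div_le_iff₀ (by positivity : (0:ℝ) < (1 - r) ^ 2)]
    linarith
  -- numerator decomposition
  have hEqN : (∑ i ∈ Icc K m, (m.choose i : ℝ) * p ^ i * (1 - p) ^ (m - i) * i)
      = (K:ℝ) * Den + T := by
    rw [hDen, hT, mul_sum, ← sum_add_distrib]
    exact sum_congr rfl fun i _ => by simp only [hb]; ring
  rw [hEqN, div_lt_iff₀ hDenpos]
  have hTb : T ≤ Den * (4 * (m:ℝ) ^ ((1:ℝ)/2)) := by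
    refine hTle.trans (mul_le_mul hDenK hrb ?_ hDenpos.le)
    exact div_nonneg hrnn (by positivity)
  have hKfin : (K:ℝ) + 4 * (m:ℝ) ^ ((1:ℝ)/2) < 2 * m * p := by
    have hcpm : c * m ≤ p * m := mul_le_mul_of_nonneg_right hcp hmpos.le
    linarith
  nlinarith [mul_lt_mul_of_pos_left hKfin hDenpos]
end

section
/- Let X be a Binomial(m,p) random variable with p ∈ (0,1/2). There exists N such that for all m ≥ N and all integers k with pm ≤ k ≤ pm + m^{3/4} + 1, P(X ≥ k+1) > P(X = k). -/
open Finset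

lemma key_growth (ε : ℝ) (hε : 0 < ε) :
    ∃ N : ℕ, ∀ m : ℕ, N ≤ m → (m : ℝ) ^ ((3:ℝ)/4) + 1 ≤ ε * m := by
  obtain ⟨N, hN⟩ := exists_nat_ge ((2/ε)^(4:ℕ) + 1)
  refine ⟨max N 2, fun m hm => ?_⟩
  have hm2 : (2:ℝ) ≤ m := by exact_mod_cast le_trans (le_max_right N 2) hm
  have hmN : ((2/ε)^(4:ℕ) : ℝ) + 1 ≤ m := by
    refine le_trans hN ?_
    exact_mod_cast le_trans (le_max_left N 2) hm
  have hm0 : (0:ℝ) < m := by linarith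
  have h14 : (2/ε) ≤ (m:ℝ) ^ ((1:ℝ)/4) := by
    have h1 : ((2/ε)^(4:ℕ) : ℝ) ≤ (m:ℝ) := by linarith
    have h2 : (((2/ε)^(4:ℕ) : ℝ)) ^ ((1:ℝ)/4) ≤ (m:ℝ) ^ ((1:ℝ)/4) :=
      Real.rpow_le_rpow (by positivity) h1 (by norm_num)
    calc (2/ε) = (((2/ε)^(4:ℕ) : ℝ)) ^ ((1:ℝ)/4) := by
          rw [← Real.rpow_natCast (2/ε) 4, ← Real.rpow_mul (by positivity)]
          norm_num
      _ ≤ _ := h2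
  have hsplit : (m:ℝ) = (m:ℝ) ^ ((3:ℝ)/4) * (m:ℝ) ^ ((1:ℝ)/4) := by
    rw [← Real.rpow_add hm0]; norm_num
  have h34pos : (0:ℝ) < (m:ℝ) ^ ((3:ℝ)/4) := Real.rpow_pos_of_pos hm0 _
  have h34ge1 : (1:ℝ) ≤ (m:ℝ) ^ ((3:ℝ)/4) :=
    Real.one_le_rpow (by linarith) (by norm_num)
  have heq : ε * m = ε * ((m:ℝ)^((3:ℝ)/4) * (m:ℝ)^((1:ℝ)/4)) := by rw [← hsplit]
  rw [heq]
  have h2 : 2 * (m:ℝ)^((3:ℝ)/4) ≤ ε * ((m:ℝ)^((3:ℝ)/4) * (m:ℝ)^((1:ℝ)/4)) := by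
    have h3 := mul_le_mul_of_nonneg_left h14 (le_of_lt (mul_pos hε h34pos))
    calc 2 * (m:ℝ)^((3:ℝ)/4) = (ε * (m:ℝ)^((3:ℝ)/4)) * (2/ε) := by
          field_simp
      _ ≤ (ε * (m:ℝ)^((3:ℝ)/4)) * ((m:ℝ)^((1:ℝ)/4)) := h3
      _ = _ := by ring
  linarith

lemma step_ratio (m j : ℕ) (p : ℝ) (hp : 0 < p) (hq : 0 < 1 - p)
    (hjm : j + 1 ≤ m)
    (hr : 3 * (1 - p) * ((j:ℝ) + 1) ≤ 4 * p * ((m:ℝ) - j)) :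
    (3/4) * ((m.choose j : ℝ) * p ^ j * (1 - p) ^ (m - j)) ≤
      (m.choose (j+1) : ℝ) * p ^ (j+1) * (1 - p) ^ (m - (j+1)) := by
  have hjm' : j ≤ m := le_trans (Nat.le_succ j) hjm
  have hid : (m.choose (j+1) : ℝ) * ((j:ℝ)+1) = (m.choose j : ℝ) * ((m:ℝ) - j) := by
    have h := Nat.choose_succ_right_eq m j
    have h2 : ((m.choose (j+1) * (j+1) : ℕ) : ℝ) = ((m.choose j * (m - j) : ℕ) : ℝ) := by
      exact_mod_cast congrArg (fun n : ℕ => (n : ℝ)) h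
    push_cast [Nat.cast_sub hjm'] at h2
    linarith
  have hexp : m - j = (m - (j+1)) + 1 := by omega
  set Q : ℝ := (1-p) ^ (m - (j+1)) with hQdef
  have hQ : (0:ℝ) < Q := by positivity
  have hpowsucc : (1-p) ^ (m - j) = Q * (1-p) := by
    rw [hexp, pow_succ]
  have hj1 : (0:ℝ) < (j:ℝ) + 1 := by positivity
  have hP : (0:ℝ) ≤ (m.choose j : ℝ) * p ^ j * Q := by positivity
  have h1 := mul_le_mul_of_nonneg_right hr hP
  -- rewrite RHS using hid
  have hR : 4 * p * ((m:ℝ) - j) * ((m.choose j : ℝ) * p ^ j * Q)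
      = ((j:ℝ)+1) * (4 * ((m.choose (j+1) : ℝ) * p ^ (j+1) * Q)) := by
    rw [pow_succ]
    linear_combination (-4 * p ^ j * Q * p) * hid
  rw [hR] at h1
  have h2 : ((j:ℝ)+1) * (3 * ((m.choose j : ℝ) * p ^ j * Q * (1-p)))
      ≤ ((j:ℝ)+1) * (4 * ((m.choose (j+1) : ℝ) * p ^ (j+1) * Q)) := by
    calc ((j:ℝ)+1) * (3 * ((m.choose j : ℝ) * p ^ j * Q * (1-p)))
        = 3 * (1-p) * ((j:ℝ)+1) * ((m.choose j : ℝ) * p ^ j * Q) := by ring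
      _ ≤ _ := h1
  have h3 := le_of_mul_le_mul_left h2 hj1
  rw [hpowsucc]
  linarith

theorem stmt8 (p : ℝ) (hp : 0 < p) (hp2 : p < 1 / 2) :
    ∃ N : ℕ, ∀ m : ℕ, N ≤ m → ∀ k : ℕ,
      p * m ≤ k → (k : ℝ) ≤ p * m + (m : ℝ) ^ ((3 : ℝ) / 4) + 1 →
      (∑ i ∈ Finset.Icc (k + 1) m, (m.choose i : ℝ) * p ^ i * (1 - p) ^ (m - i)) >
        (m.choose k : ℝ) * p ^ k * (1 - p) ^ (m - k) := by
  obtain ⟨N1, hN1⟩ := key_growth (p/26) (by positivity)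
  obtain ⟨N2, hN2⟩ := key_growth (1/4) (by norm_num)
  refine ⟨max (max N1 N2) 8, fun m hm k hk1 hk2 => ?_⟩
  have hq : (0:ℝ) < 1 - p := by linarith
  have hm8 : (8:ℝ) ≤ (m:ℝ) := by
    exact_mod_cast le_trans (le_max_right _ 8) hm
  have hM0 : (0:ℝ) ≤ (m:ℝ) := by linarith
  have hg1 : (m:ℝ)^((3:ℝ)/4) + 1 ≤ (p/26) * m :=
    hN1 m (le_trans (le_trans (le_max_left N1 N2) (le_max_left _ 8)) hm)
  have hg2 : (m:ℝ)^((3:ℝ)/4) + 1 ≤ (1/4) * m :=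
    hN2 m (le_trans (le_trans (le_max_right N1 N2) (le_max_left _ 8)) hm)
  have hpM : p * m ≤ (m:ℝ)/2 := by nlinarith
  have hkm : (k:ℝ) + 2 ≤ (m:ℝ) := by linarith
  have hkm' : k + 2 ≤ m := by exact_mod_cast hkm
  -- ratio condition at j = k+1
  have hr2 : 3 * (1 - p) * ((k:ℝ) + 2) ≤ 4 * p * ((m:ℝ) - ((k:ℝ)+1)) := by
    nlinarith [mul_le_mul_of_nonneg_left hk2 (by positivity : (0:ℝ) ≤ 4*p),
      mul_le_mul_of_nonneg_left hk2 (by positivity : (0:ℝ) ≤ 3*(1-p)),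
      mul_nonneg (mul_nonneg hp.le (by linarith : (0:ℝ) ≤ 1/2 - p)) hM0,
      Real.rpow_nonneg hM0 ((3:ℝ)/4), hg1]
  have hr1 : 3 * (1 - p) * ((k:ℝ) + 1) ≤ 4 * p * ((m:ℝ) - (k:ℝ)) := by
    nlinarith [hr2]
  have hs1 := step_ratio m k p hp hq (by omega) hr1
  have hs2 : (3/4) * ((m.choose (k+1) : ℝ) * p ^ (k+1) * (1 - p) ^ (m - (k+1))) ≤
      (m.choose (k+2) : ℝ) * p ^ (k+2) * (1 - p) ^ (m - (k+2)) := by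
    have := step_ratio m (k+1) p hp hq (by omega) (by push_cast; linarith [hr2])
    convert this using 3 <;> push_cast <;> ring_nf
  -- sum lower bound
  set f : ℕ → ℝ := fun i => (m.choose i : ℝ) * p ^ i * (1 - p) ^ (m - i) with hf
  have hsub : ({k+1, k+2} : Finset ℕ) ⊆ Finset.Icc (k+1) m := by
    intro x hx
    simp only [Finset.mem_insert, Finset.mem_singleton] at hx
    rcases hx with h | h <;> simp [Finset.mem_Icc, h] <;> omega
  have hpair : (∑ i ∈ ({k+1, k+2} : Finset ℕ), f i) = f (k+1) + f (k+2) := by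
    rw [Finset.sum_insert (by simp), Finset.sum_singleton]
  have hsum : (∑ i ∈ ({k+1, k+2} : Finset ℕ), f i) ≤
      ∑ i ∈ Finset.Icc (k+1) m, f i := by
    apply Finset.sum_le_sum_of_subset_of_nonneg hsub
    intro i _ _
    have : (0:ℝ) < 1 - p := hq
    positivity
  have hApos : (0:ℝ) < (m.choose k : ℝ) * p ^ k * (1 - p) ^ (m - k) := by
    have hc : 0 < m.choose k := Nat.choose_pos (by omega)
    have hc' : (0:ℝ) < (m.choose k : ℝ) := by exact_mod_cast hc
    positivity
  rw [hpair] at hsum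
  have hfk : f (k+1) = (m.choose (k+1) : ℝ) * p ^ (k+1) * (1 - p) ^ (m - (k+1)) := rfl
  have hfk2 : f (k+2) = (m.choose (k+2) : ℝ) * p ^ (k+2) * (1 - p) ^ (m - (k+2)) := rfl
  have h7 : (7/4 : ℝ) * ((m.choose (k+1) : ℝ) * p ^ (k+1) * (1 - p) ^ (m - (k+1)))
      ≤ f (k+1) + f (k+2) := by rw [hfk, hfk2]; linarith
  calc (m.choose k : ℝ) * p ^ k * (1 - p) ^ (m - k)
      < (21/16) * ((m.choose k : ℝ) * p ^ k * (1 - p) ^ (m - k)) := by linarith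
    _ ≤ (7/4) * ((m.choose (k+1) : ℝ) * p ^ (k+1) * (1 - p) ^ (m - (k+1))) := by linarith
    _ ≤ f (k+1) + f (k+2) := h7
    _ ≤ _ := hsum
end

section
/- Let n and k be integers with 12 ≤ k ≤ n and n ≥ 22. For all x ∈ (0,1], the function f(x) = (Σ_{i=1}^{k} x^i/i − x^k)/(Σ_{i=1}^{n} x^i/i) satisfies f(x) ≥ 1 − (1 + ln(n−1) − ln k)/ln(k+1). -/
lemma log13 : Real.log 13 ≤ 2.5984 := by
  have h1 : (13:ℝ) ≤ (10203/10000:ℝ)^128 := by norm_num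
  have h2 : Real.log 13 ≤ Real.log ((10203/10000:ℝ)^128) :=
    Real.log_le_log (by norm_num) h1
  rw [Real.log_pow] at h2
  have h3 : Real.log (10203/10000:ℝ) ≤ 10203/10000 - 1 :=
    Real.log_le_sub_one_of_pos (by norm_num)
  calc Real.log 13 ≤ 128 * Real.log (10203/10000:ℝ) := by exact_mod_cast h2
    _ ≤ 128 * (10203/10000 - 1) := by linarith
    _ ≤ 2.5984 := by norm_num

lemma harm (k : ℕ) (hk : 12 ≤ k) :
    Real.log (k+1) + 1/2 ≤ ∑ i ∈ Finset.Icc 1 k, (1:ℝ)/i := by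
  induction k, hk using Nat.le_induction with
  | base =>
    have hsum : ∑ i ∈ Finset.Icc (1:ℕ) 12, (1:ℝ)/(i:ℝ) = 86021/27720 := by
      simp [Finset.sum_Icc_succ_top]
      norm_num
    rw [hsum]
    have := log13
    norm_num
    linarith
  | succ k hk ih =>
    rw [Finset.sum_Icc_succ_top (by omega : 1 ≤ k + 1)]
    have hne1 : ((k:ℝ)+1+1) ≠ 0 := by positivity
    have hne2 : ((k:ℝ)+1) ≠ 0 := by positivity
    have hlog := Real.log_le_sub_one_of_pos
      (show (0:ℝ) < ((k:ℝ)+1+1)/((k:ℝ)+1) by positivity)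
    rw [Real.log_div hne1 hne2] at hlog
    have heq : ((k:ℝ)+1+1)/((k:ℝ)+1) - 1 = 1/((k:ℝ)+1) := by field_simp; ring
    push_cast
    push_cast at ih
    linarith

lemma tail (k n : ℕ) (hk : 1 ≤ k) (hkn : k ≤ n) :
    ∑ i ∈ Finset.Icc (k+1) n, (1:ℝ)/i ≤ Real.log n - Real.log k := by
  induction n, hkn using Nat.le_induction with
  | base => simp
  | succ n hn ih =>
    rw [Finset.sum_Icc_succ_top (by omega : k + 1 ≤ n + 1)]
    have hn0 : (0:ℝ) < n := by
      have : 1 ≤ n := le_trans hk hn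
      exact_mod_cast this
    have hne1 : (n:ℝ) ≠ 0 := ne_of_gt hn0
    have hne2 : ((n:ℝ)+1) ≠ 0 := by positivity
    have hlog := Real.log_le_sub_one_of_pos
      (show (0:ℝ) < (n:ℝ)/((n:ℝ)+1) by positivity)
    rw [Real.log_div hne1 hne2] at hlog
    have heq : (n:ℝ)/((n:ℝ)+1) - 1 = -(1/((n:ℝ)+1)) := by field_simp; ring
    push_cast
    linarith

set_option maxHeartbeats 1000000 in
theorem stmt12 (n k : ℕ) (hk : 12 ≤ k) (hkn : k ≤ n) (hn : 22 ≤ n) :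
    ∀ x ∈ Set.Ioc (0 : ℝ) 1,
      ((∑ i ∈ Finset.Icc 1 k, x ^ i / i) - x ^ k) /
          (∑ i ∈ Finset.Icc 1 n, x ^ i / i) ≥
        1 - (1 + Real.log ((n : ℝ) - 1) - Real.log k) / Real.log (k + 1) := by
  intro x hx
  obtain ⟨hx0, hx1⟩ := hx
  have hkR : (12:ℝ) ≤ (k:ℝ) := by exact_mod_cast hk
  have hnR : (22:ℝ) ≤ (n:ℝ) := by exact_mod_cast hn
  have hknR : (k:ℝ) ≤ (n:ℝ) := by exact_mod_cast hkn
  set a := Real.log ((k:ℝ) + 1) with ha_def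
  set K := Real.log (k:ℝ) with hK_def
  set M := Real.log ((n:ℝ) - 1) with hM_def
  set L := Real.log (n:ℝ) with hL_def
  set Hk := ∑ i ∈ Finset.Icc 1 k, (1:ℝ)/(i:ℝ) with hHk_def
  set s := ∑ i ∈ Finset.Icc (k+1) n, (1:ℝ)/(i:ℝ) with hs_def
  set Wk := ∑ i ∈ Finset.Icc 1 k, x ^ i / (i:ℝ) with hWk_def
  set T := ∑ i ∈ Finset.Icc (k+1) n, x ^ i / (i:ℝ) with hT_def
  have ha : 0 < a := Real.log_pos (by linarith)
  have hsplit : ∑ i ∈ Finset.Icc 1 n, x ^ i / (i:ℝ) = Wk + T := by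
    rw [hWk_def, hT_def]
    rw [show Finset.Icc 1 n = Finset.Ioc 0 n from Finset.Icc_add_one_left_eq_Ioc 0 n,
        show Finset.Icc 1 k = Finset.Ioc 0 k from Finset.Icc_add_one_left_eq_Ioc 0 k,
        show Finset.Icc (k+1) n = Finset.Ioc k n from Finset.Icc_add_one_left_eq_Ioc k n]
    exact (Finset.sum_Ioc_consecutive _ (Nat.zero_le k) hkn).symm
  have hxk : 0 < x ^ k := pow_pos hx0 k
  have hWk_pos : 0 < Wk := by
    apply Finset.sum_pos
    · intro i hi
      simp only [Finset.mem_Icc] at hi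
      have : (0:ℝ) < i := by exact_mod_cast hi.1
      positivity
    · exact ⟨1, Finset.mem_Icc.mpr ⟨le_refl 1, by omega⟩⟩
  have hT_nonneg : 0 ≤ T := by
    apply Finset.sum_nonneg
    intro i hi
    have : (0:ℝ) ≤ i := by positivity
    positivity
  have hs_nonneg : 0 ≤ s := by
    apply Finset.sum_nonneg
    intro i _
    positivity
  have hT_le : T ≤ x ^ k * s := by
    rw [hT_def, hs_def, Finset.mul_sum]
    apply Finset.sum_le_sum
    intro i hi
    simp only [Finset.mem_Icc] at hi
    have hik : k ≤ i := by omega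
    have hi0 : (0:ℝ) < i := by
      have : 0 < i := by omega
      exact_mod_cast this
    have hpow : x ^ i ≤ x ^ k := pow_le_pow_of_le_one hx0.le hx1 hik
    have heq : x ^ k * (1/(i:ℝ)) = x ^ k / i := by ring
    rw [heq]
    gcongr
  have hWk_ge : x ^ k * Hk ≤ Wk := by
    rw [hWk_def, hHk_def, Finset.mul_sum]
    apply Finset.sum_le_sum
    intro i hi
    simp only [Finset.mem_Icc] at hi
    have hi0 : (0:ℝ) < i := by
      have : 0 < i := hi.1
      exact_mod_cast this
    have hpow : x ^ k ≤ x ^ i := pow_le_pow_of_le_one hx0.le hx1 hi.2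
    have heq : x ^ k * (1/(i:ℝ)) = x ^ k / i := by ring
    rw [heq]
    gcongr
  have hH : a + 1/2 ≤ Hk := by
    have := harm k hk
    rw [ha_def, hHk_def]
    push_cast at this ⊢
    linarith
  have hs_le : s ≤ L - K := by
    have := tail k n (by omega) hkn
    rw [hs_def, hL_def, hK_def]
    exact this
  have hM_pos : (0:ℝ) < (n:ℝ) - 1 := by linarith
  have hLM : L - M ≤ 1/((n:ℝ)-1) := by
    have hlog := Real.log_le_sub_one_of_pos
      (show (0:ℝ) < (n:ℝ)/((n:ℝ)-1) by positivity)
    rw [Real.log_div (by linarith) (ne_of_gt hM_pos)] at hlog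
    have heq : (n:ℝ)/((n:ℝ)-1) - 1 = 1/((n:ℝ)-1) := by field_simp; ring
    rw [hL_def, hM_def]; linarith
  have hLM0 : 0 ≤ L - M := by
    have := Real.log_le_log hM_pos (show (n:ℝ) - 1 ≤ n by linarith)
    rw [hL_def, hM_def]; linarith
  have hLK0 : 0 ≤ L - K := by
    have := Real.log_le_log (show (0:ℝ) < k by linarith) hknR
    rw [hL_def, hK_def]; linarith
  set u := Real.sqrt ((n:ℝ) + 1) with hu_def
  have hu0 : 0 ≤ u := Real.sqrt_nonneg _
  have hu2 : u ^ 2 = (n:ℝ) + 1 := Real.sq_sqrt (by linarith)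
  have hu4 : 4 ≤ u := by
    rw [hu_def]
    rw [show (4:ℝ) = Real.sqrt 16 by
      rw [show (16:ℝ) = 4^2 by norm_num, Real.sqrt_sq (by norm_num)]]
    exact Real.sqrt_le_sqrt (by linarith)
  have ha_ub : a ≤ 2*u - 2 := by
    have h1 : a ≤ Real.log ((n:ℝ)+1) := by
      rw [ha_def]
      exact Real.log_le_log (by linarith) (by linarith)
    have h2 : Real.log ((n:ℝ)+1) = 2 * Real.log u := by
      rw [hu_def, Real.log_sqrt (by linarith)]; ring
    have h3 : Real.log u ≤ u - 1 := Real.log_le_sub_one_of_pos (by linarith)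
    linarith
  have hLM21 : L - M ≤ 1/21 := by
    have h21 : 1/((n:ℝ)-1) ≤ 1/21 := by
      apply div_le_div_of_nonneg_left (by norm_num) (by norm_num) (by linarith)
    linarith
  have e1 : a * (L - M) ≤ (2*u - 2) * (1/((n:ℝ)-1)) :=
    mul_le_mul ha_ub hLM hLM0 (by linarith)
  have e2 : (2*u - 2) * (1/((n:ℝ)-1)) ≤ 10/21 := by
    have heq : (2*u - 2) * (1/((n:ℝ)-1)) = (2*u-2)/((n:ℝ)-1) := by ring
    rw [heq, div_le_div_iff₀ hM_pos (by norm_num)]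
    nlinarith [mul_nonneg (show (0:ℝ) ≤ u - 4 by linarith)
      (show (0:ℝ) ≤ 10*u - 2 by linarith)]
  have e4 : a * (L - M) ≤ 10/21 := le_trans e1 e2
  have e5 : (10:ℝ)/21 ≤ (1/2) * (1 + M - K) := by linarith
  have hMK0 : 0 ≤ 1 + M - K := by linarith
  have c1 : a * (1 + s) ≤ a * (1 + (L - K)) :=
    mul_le_mul_of_nonneg_left (by linarith) ha.le
  have c6 : (a + 1/2) * (1 + M - K) ≤ Hk * (1 + M - K) :=
    mul_le_mul_of_nonneg_right (by linarith) hMK0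
  have r1 : a * (1 + (L - K)) = a * (1 + M - K) + a * (L - M) := by ring
  have r2 : (a + 1/2) * (1 + M - K) = a * (1 + M - K) + (1/2) * (1 + M - K) := by
    ring
  have core : a * (1 + s) ≤ Hk * (1 + M - K) := by linarith
  have hB0 : 0 ≤ (1 + M - K) / a := div_nonneg hMK0 ha.le
  have hkey : T + x ^ k ≤ ((1 + M - K) / a) * (Wk + T) := by
    have k1 : 1 + s ≤ Hk * (1 + M - K) / a := by
      rw [le_div_iff₀ ha]; linarith
    have r3 : x ^ k * (1 + s) = x ^ k + x ^ k * s := by ring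
    have r4 : ((1 + M - K) / a) * (Wk + T)
        = Wk * ((1 + M - K) / a) + T * ((1 + M - K) / a) := by ring
    have r5 : 0 ≤ T * ((1 + M - K) / a) := mul_nonneg hT_nonneg hB0
    have s1 : x ^ k * (1 + s) ≤ x ^ k * (Hk * (1 + M - K) / a) :=
      mul_le_mul_of_nonneg_left k1 hxk.le
    have r6 : x ^ k * (Hk * (1 + M - K) / a)
        = (x ^ k * Hk) * ((1 + M - K) / a) := by ring
    have s2 : (x ^ k * Hk) * ((1 + M - K) / a) ≤ Wk * ((1 + M - K) / a) :=
      mul_le_mul_of_nonneg_right hWk_ge hB0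
    linarith
  rw [hsplit, ge_iff_le]
  have hWn_pos : 0 < Wk + T := by linarith
  rw [le_div_iff₀ hWn_pos]
  have rexp : (1 - (1 + M - K) / a) * (Wk + T)
      = (Wk + T) - ((1 + M - K) / a * (Wk + T)) := by ring
  linarith
end
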